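/- The map a ↦ Z_a^{−1} = ∫_{ℝ^d} e^{−2(V(x)−V*)/a²} dx is non-decreasing on (0,A], and there exists a constant C > 0 such that for all n ≥ 1, 0 ≤ Z_{a_n}^{−1} − Z_{a_{n+1}}^{−1} ≤ C·a_{n+1}^{d−1}·(a_n − a_{n+1}). -/

import Mathlib

open MeasureTheory Filter

noncomputable section

abbrev Euc (d : ℕ) := EuclideanSpace ℝ (Fin d)

/-- `L¹`-Wasserstein distance between two measures on `ℝ^d`: infimum of `∫ |x−y| dπ`
over all probability couplings `π`. -/
def W1 {d : ℕ} (μ ν : Measure (Euc d)) : ℝ :=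
  sInf { r : ℝ | ∃ cpl : Measure (Euc d × Euc d), IsProbabilityMeasure cpl ∧
    cpl.map Prod.fst = μ ∧ cpl.map Prod.snd = ν ∧ r = ∫ p, dist p.1 p.2 ∂cpl }

/-- The Gibbs measure `ν_a` with density `Z_a e^{−2(V(x)−V*)/a²}`. -/
def gibbs {d : ℕ} (V : Euc d → ℝ) (Vstar a : ℝ) : Measure (Euc d) :=
  (ENNReal.ofReal (∫ x : Euc d, Real.exp (-2 * (V x - Vstar) / a ^ 2)))⁻¹ •
    volume.withDensity (fun x => ENNReal.ofReal (Real.exp (-2 * (V x - Vstar) / a ^ 2)))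

/-- `T_n = C_T n^{1+β}`. -/
def Tsched (C_T β : ℝ) (n : ℕ) : ℝ := C_T * (n : ℝ) ^ (1 + β)

/-- `a_n = A / √(log(T_n + e))`. -/
def aSeq (A C_T β : ℝ) (n : ℕ) : ℝ :=
  A / Real.sqrt (Real.log (Tsched C_T β n + Real.exp 1))

/-- Hessian quadratic form `v ↦ ∇²V(x)[v,v]`. -/
def hessQuad {d : ℕ} (V : Euc d → ℝ) (x v : Euc d) : ℝ :=
  iteratedFDeriv ℝ 2 V x ![v, v]

/-- Determinant of the Hessian matrix `∇²V(x)`. -/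
def hessDet {d : ℕ} (V : Euc d → ℝ) (x : Euc d) : ℝ :=
  (Matrix.of fun i j : Fin d =>
    iteratedFDeriv ℝ 2 V x ![EuclideanSpace.single i (1 : ℝ), EuclideanSpace.single j (1 : ℝ)]).det

/-- The limiting measure
`ν* = (Σ_j det(∇²V(x_j*))^{−1/2})^{−1} Σ_i det(∇²V(x_i*))^{−1/2} δ_{x_i*}`. -/
def nuStar {d m : ℕ} (V : Euc d → ℝ) (xs : Fin m → Euc d) : Measure (Euc d) :=
  ∑ i : Fin m, (ENNReal.ofReal (hessDet V (xs i) ^ (-(1 : ℝ) / 2) /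
      ∑ j : Fin m, hessDet V (xs j) ^ (-(1 : ℝ) / 2))) • Measure.dirac (xs i)

lemma aux_mul_exp_le (t : ℝ) : t * Real.exp (-t) ≤ 1 := by
  rcases le_or_gt t 0 with h | h
  · have := Real.exp_pos (-t)
    nlinarith
  · have h1 : t ≤ Real.exp t := by linarith [Real.add_one_le_exp t]
    calc t * Real.exp (-t) ≤ Real.exp t * Real.exp (-t) :=
          mul_le_mul_of_nonneg_right h1 (Real.exp_pos _).le
      _ = 1 := by rw [← Real.exp_add]; simp

lemma aux_exp_sub_exp {x y : ℝ} (h : x ≤ y) :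
    Real.exp (-x) - Real.exp (-y) ≤ (y - x) * Real.exp (-x) := by
  have h1 : 1 - (y - x) ≤ Real.exp (-(y - x)) := by linarith [Real.add_one_le_exp (-(y - x))]
  have h2 : Real.exp (-y) = Real.exp (-x) * Real.exp (-(y - x)) := by
    rw [← Real.exp_add]; ring_nf
  nlinarith [Real.exp_pos (-x)]

lemma aux_exp_neg_le {t : ℝ} (ht : 0 < t) (k : ℕ) :
    Real.exp (-t) ≤ (k.factorial : ℝ) / t ^ k := by
  have hf : (0:ℝ) < (k.factorial : ℝ) := by exact_mod_cast k.factorial_pos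
  have h1 : t ^ k / (k.factorial : ℝ) ≤ Real.exp t := by
    have hs := Real.sum_le_exp_of_nonneg ht.le (k + 1)
    have h2 : t ^ k / (k.factorial : ℝ) ≤ ∑ i ∈ Finset.range (k + 1), t ^ i / i.factorial :=
      Finset.single_le_sum (f := fun i => t ^ i / (i.factorial : ℝ))
        (fun i _ => by positivity) (Finset.self_mem_range_succ k)
    linarith
  rw [le_div_iff₀ (by positivity : (0:ℝ) < t ^ k)]
  have h3 : Real.exp (-t) * t ^ k = t ^ k / Real.exp t := by rw [Real.exp_neg]; ring
  rw [h3, div_le_iff₀ (Real.exp_pos t)]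
  calc t ^ k = t ^ k / (k.factorial : ℝ) * (k.factorial : ℝ) := by field_simp
    _ ≤ Real.exp t * (k.factorial : ℝ) := mul_le_mul_of_nonneg_right h1 hf.le
    _ = (k.factorial : ℝ) * Real.exp t := mul_comm _ _

lemma integrable_gauss {d : ℕ} {b : ℝ} (hb : 0 < b) :
    Integrable (fun v : Euc d => Real.exp (-b * ‖v‖ ^ 2)) := by
  have h := (GaussianFourier.integrable_cexp_neg_mul_sq_norm_add (V := Euc d)
      (b := (b : ℂ)) (by simpa using hb) 0 0).norm
  have he : ∀ v : Euc d,
      ‖Complex.exp (-(b : ℂ) * (‖v‖ : ℂ) ^ 2 + 0 * ((inner ℝ (0 : Euc d) v : ℝ) : ℂ))‖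
        = Real.exp (-b * ‖v‖ ^ 2) := by
    intro v
    have hre : (-(b : ℂ) * (‖v‖ : ℂ) ^ 2 + 0 * ((inner ℝ (0 : Euc d) v : ℝ) : ℂ)).re
        = -b * ‖v‖ ^ 2 := by
      push_cast
      simp only [Complex.add_re, Complex.mul_re, Complex.neg_re, Complex.ofReal_re,
        Complex.zero_re, Complex.neg_im, Complex.ofReal_im, Complex.zero_im]
      norm_cast
      ring
    rw [Complex.norm_exp, hre]
  refine h.congr (Filter.Eventually.of_forall fun v => ?_)
  exact he v

lemma integral_gauss {d : ℕ} {b : ℝ} (hb : 0 < b) :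
    ∫ v : Euc d, Real.exp (-b * ‖v‖ ^ 2) = (Real.pi / b) ^ ((d : ℝ) / 2) := by
  have h := GaussianFourier.integral_rexp_neg_mul_sq_norm (V := Euc d) hb
  simpa [finrank_euclideanSpace_fin] using h

lemma aux_wexp {w b : ℝ} (hw : 0 ≤ w) (hb : 0 < b) :
    w * Real.exp (-2 * w / b ^ 2) ≤ b ^ 2 * Real.exp (-w / b ^ 2) := by
  have h1 := aux_mul_exp_le (w / b ^ 2)
  have hb2 : (0:ℝ) < b ^ 2 := by positivity
  have h2 : Real.exp (-2 * w / b ^ 2) = Real.exp (-(w / b ^ 2)) * Real.exp (-(w / b ^ 2)) := by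
    rw [← Real.exp_add]; congr 1; field_simp; ring
  have h3 : w * Real.exp (-2 * w / b ^ 2)
      = b ^ 2 * (w / b ^ 2 * Real.exp (-(w / b ^ 2))) * Real.exp (-(w / b ^ 2)) := by
    rw [h2]; field_simp
  rw [h3]
  have h4 : b ^ 2 * (w / b ^ 2 * Real.exp (-(w / b ^ 2))) * Real.exp (-(w / b ^ 2))
      ≤ b ^ 2 * 1 * Real.exp (-(w / b ^ 2)) := by
    apply mul_le_mul_of_nonneg_right _ (Real.exp_pos _).le
    exact mul_le_mul_of_nonneg_left h1 hb2.le
  calc b ^ 2 * (w / b ^ 2 * Real.exp (-(w / b ^ 2))) * Real.exp (-(w / b ^ 2))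
      ≤ b ^ 2 * 1 * Real.exp (-(w / b ^ 2)) := h4
    _ = b ^ 2 * Real.exp (-w / b ^ 2) := by rw [neg_div]; ring


section ASeq
variable {A C_T β : ℝ} (hA : 0 < A) (hCT : 0 < C_T) (hβ : 0 < β)

lemma Tsched_nonneg (hCT : 0 < C_T) (hβ : 0 < β) (n : ℕ) : 0 ≤ Tsched C_T β n := by
  unfold Tsched; positivity

lemma Tsched_mono (hCT : 0 < C_T) (hβ : 0 < β) (n : ℕ) :
    Tsched C_T β n < Tsched C_T β (n + 1) := by
  unfold Tsched
  have h : ((n : ℝ)) ^ (1 + β) < ((n + 1 : ℕ) : ℝ) ^ (1 + β) := by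
    apply Real.rpow_lt_rpow (by positivity) (by exact_mod_cast Nat.lt_succ_self n) (by linarith)
  nlinarith

lemma logT_ge_one (hCT : 0 < C_T) (hβ : 0 < β) (n : ℕ) :
    1 ≤ Real.log (Tsched C_T β n + Real.exp 1) := by
  have h0 : Real.exp 1 ≤ Tsched C_T β n + Real.exp 1 := by
    linarith [Tsched_nonneg hCT hβ n]
  calc (1:ℝ) = Real.log (Real.exp 1) := (Real.log_exp 1).symm
    _ ≤ Real.log (Tsched C_T β n + Real.exp 1) :=
        Real.log_le_log (Real.exp_pos 1) h0

lemma logT_pos (hCT : 0 < C_T) (hβ : 0 < β) (n : ℕ) :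
    0 < Real.log (Tsched C_T β n + Real.exp 1) :=
  lt_of_lt_of_le one_pos (logT_ge_one hCT hβ n)

lemma sqrt_logT_pos (hCT : 0 < C_T) (hβ : 0 < β) (n : ℕ) :
    0 < Real.sqrt (Real.log (Tsched C_T β n + Real.exp 1)) :=
  Real.sqrt_pos.2 (logT_pos hCT hβ n)

lemma sqrt_logT_ge_one (hCT : 0 < C_T) (hβ : 0 < β) (n : ℕ) :
    1 ≤ Real.sqrt (Real.log (Tsched C_T β n + Real.exp 1)) := by
  have h := Real.sqrt_le_sqrt (logT_ge_one hCT hβ n)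
  simpa using h

lemma aSeq_pos (hA : 0 < A) (hCT : 0 < C_T) (hβ : 0 < β) (n : ℕ) :
    0 < aSeq A C_T β n :=
  div_pos hA (sqrt_logT_pos hCT hβ n)

lemma aSeq_le_A (hA : 0 < A) (hCT : 0 < C_T) (hβ : 0 < β) (n : ℕ) :
    aSeq A C_T β n ≤ A := by
  unfold aSeq
  rw [div_le_iff₀ (sqrt_logT_pos hCT hβ n)]
  nlinarith [sqrt_logT_ge_one hCT hβ n, hA]

lemma aSeq_anti (hA : 0 < A) (hCT : 0 < C_T) (hβ : 0 < β) (n : ℕ) :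
    aSeq A C_T β (n + 1) < aSeq A C_T β n := by
  unfold aSeq
  apply div_lt_div_of_pos_left hA (sqrt_logT_pos hCT hβ n)
  apply Real.sqrt_lt_sqrt (logT_pos hCT hβ n).le
  apply Real.log_lt_log
  · linarith [Tsched_nonneg hCT hβ n, Real.exp_pos 1]
  · linarith [Tsched_mono hCT hβ n]

lemma aSeq_ratio (hA : 0 < A) (hCT : 0 < C_T) (hβ : 0 < β) {n : ℕ} (hn : 1 ≤ n) :
    aSeq A C_T β n ≤ Real.sqrt (1 + (1 + β) * Real.log 2) * aSeq A C_T β (n + 1) := by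
  set K : ℝ := 1 + (1 + β) * Real.log 2 with hK
  have hlog2 : 0 < Real.log 2 := Real.log_pos (by norm_num)
  have hK1 : 1 ≤ K := by nlinarith
  set Ln := Real.log (Tsched C_T β n + Real.exp 1) with hLn
  set Ln1 := Real.log (Tsched C_T β (n + 1) + Real.exp 1) with hLn1
  have hLnpos : 0 < Ln := logT_pos hCT hβ n
  have hLn1pos : 0 < Ln1 := logT_pos hCT hβ (n + 1)
  have hLnge : 1 ≤ Ln := logT_ge_one hCT hβ n
  -- T_{n+1} + e ≤ 2^{1+β} (T_n + e)
  have h2pow : (1:ℝ) ≤ (2:ℝ) ^ (1 + β) := by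
    rw [show (1:ℝ) = (2:ℝ) ^ (0:ℝ) by simp]
    exact Real.rpow_le_rpow_of_exponent_le (by norm_num) (by linarith)
  have hstep : Tsched C_T β (n + 1) + Real.exp 1 ≤
      (2:ℝ) ^ (1 + β) * (Tsched C_T β n + Real.exp 1) := by
    have h1 : ((n + 1 : ℕ) : ℝ) ^ (1 + β) ≤ ((2 : ℝ) * (n : ℝ)) ^ (1 + β) := by
      apply Real.rpow_le_rpow (by positivity) ?_ (by linarith)
      push_cast
      have : (1:ℝ) ≤ (n:ℝ) := by exact_mod_cast hn
      linarith
    have h2 : ((2 : ℝ) * (n : ℝ)) ^ (1 + β) = (2:ℝ) ^ (1 + β) * (n : ℝ) ^ (1 + β) :=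
      Real.mul_rpow (by norm_num) (by positivity)
    have h3 : Tsched C_T β (n + 1) ≤ (2:ℝ) ^ (1 + β) * Tsched C_T β n := by
      unfold Tsched
      rw [mul_comm ((2:ℝ)^(1+β)) _, mul_assoc]
      apply mul_le_mul_of_nonneg_left _ hCT.le
      rw [mul_comm]
      calc ((n + 1 : ℕ) : ℝ) ^ (1 + β) ≤ (2:ℝ) ^ (1 + β) * (n : ℝ) ^ (1 + β) := h2 ▸ h1
        _ = (2:ℝ) ^ (1 + β) * (n : ℝ) ^ (1 + β) := rfl
    nlinarith [Real.exp_pos 1]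
  have hLK : Ln1 ≤ K * Ln := by
    have h4 : Ln1 ≤ Real.log ((2:ℝ) ^ (1 + β) * (Tsched C_T β n + Real.exp 1)) := by
      apply Real.log_le_log ?_ hstep
      linarith [Tsched_nonneg hCT hβ (n+1), Real.exp_pos 1]
    rw [Real.log_mul (by positivity) (by linarith [Tsched_nonneg hCT hβ n, Real.exp_pos 1]), Real.log_rpow (by norm_num)] at h4
    nlinarith
  have hs1 : Real.sqrt Ln1 ≤ Real.sqrt K * Real.sqrt Ln := by
    rw [← Real.sqrt_mul (by linarith)]
    exact Real.sqrt_le_sqrt hLK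
  have hsn : 0 < Real.sqrt Ln := Real.sqrt_pos.2 hLnpos
  have hsn1 : 0 < Real.sqrt Ln1 := Real.sqrt_pos.2 hLn1pos
  show A / Real.sqrt Ln ≤ Real.sqrt K * (A / Real.sqrt Ln1)
  rw [← mul_div_assoc, div_le_div_iff₀ hsn hsn1]
  nlinarith [hA.le, hsn.le]

lemma aSeq_small (hA : 0 < A) (hCT : 0 < C_T) (hβ : 0 < β) :
    ∃ N : ℕ, 1 ≤ N ∧ ∀ n, N ≤ n → aSeq A C_T β n ≤ A / 2 := by
  have h1 : Tendsto (fun x : ℝ => x ^ (1 + β)) atTop atTop :=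
    tendsto_rpow_atTop (by linarith)
  have h2 : Tendsto (fun n : ℕ => ((n : ℝ)) ^ (1 + β)) atTop atTop :=
    h1.comp tendsto_natCast_atTop_atTop
  have h3 : Tendsto (fun n : ℕ => Tsched C_T β n) atTop atTop := by
    unfold Tsched
    exact h2.const_mul_atTop hCT
  obtain ⟨N, hN⟩ := Filter.eventually_atTop.1 (h3.eventually_ge_atTop (Real.exp 4))
  refine ⟨max N 1, le_max_right _ _, fun n hn => ?_⟩
  have hTn : Real.exp 4 ≤ Tsched C_T β n := hN n (le_trans (le_max_left _ _) hn)
  have hL4 : (4:ℝ) ≤ Real.log (Tsched C_T β n + Real.exp 1) := by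
    calc (4:ℝ) = Real.log (Real.exp 4) := (Real.log_exp 4).symm
      _ ≤ Real.log (Tsched C_T β n + Real.exp 1) :=
        Real.log_le_log (Real.exp_pos 4) (by linarith [Real.exp_pos 1])
  have hs2 : (2:ℝ) ≤ Real.sqrt (Real.log (Tsched C_T β n + Real.exp 1)) := by
    rw [show (2:ℝ) = Real.sqrt 4 by rw [show (4:ℝ) = 2 ^ 2 by norm_num, Real.sqrt_sq]; norm_num]
    exact Real.sqrt_le_sqrt hL4
  unfold aSeq
  exact div_le_div_of_nonneg_left hA.le (by norm_num) hs2

end ASeq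

section Integr
variable {d : ℕ} {V : Euc d → ℝ} {A Vstar : ℝ}

lemma int_master (hA : 0 < A) (hVc : Continuous V) (hVpos : ∀ x, 0 < V x)
    (hint : Integrable (fun x : Euc d => ‖x‖ ^ 2 * Real.exp (-2 * V x / A ^ 2))) :
    Integrable (fun x : Euc d => Real.exp (-2 * (V x - Vstar) / A ^ 2)) := by
  have hA2 : (0:ℝ) < A ^ 2 := by positivity
  have hcont : Continuous fun x : Euc d => Real.exp (-2 * V x / A ^ 2) :=
    Real.continuous_exp.comp ((continuous_const.mul hVc).div_const _)
  have hbase : Integrable (fun x : Euc d => Real.exp (-2 * V x / A ^ 2)) := by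
    have hg : Integrable (fun x : Euc d =>
        (Metric.closedBall (0 : Euc d) 1).indicator (fun _ => (1:ℝ)) x
          + ‖x‖ ^ 2 * Real.exp (-2 * V x / A ^ 2)) := by
      apply Integrable.add _ hint
      apply IntegrableOn.integrable_indicator _ measurableSet_closedBall
      exact integrableOn_const measure_closedBall_lt_top.ne
    apply hg.mono' hcont.aestronglyMeasurable
    refine Filter.Eventually.of_forall fun x => ?_
    rw [Real.norm_eq_abs, abs_of_pos (Real.exp_pos _)]
    rcases le_or_gt ‖x‖ 1 with h | h
    · have h1 : Real.exp (-2 * V x / A ^ 2) ≤ 1 := by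
        rw [Real.exp_le_one_iff]
        apply div_nonpos_of_nonpos_of_nonneg _ hA2.le
        nlinarith [hVpos x]
      have h2 : (Metric.closedBall (0 : Euc d) 1).indicator (fun _ => (1:ℝ)) x = 1 := by
        rw [Set.indicator_of_mem]
        rw [Metric.mem_closedBall, dist_zero_right]
        exact h
      rw [h2]
      nlinarith [Real.exp_pos (-2 * V x / A ^ 2), sq_nonneg ‖x‖]
    · have h2 : (0:ℝ) ≤ (Metric.closedBall (0 : Euc d) 1).indicator (fun _ => (1:ℝ)) x :=
        Set.indicator_nonneg (fun _ _ => zero_le_one) x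
      nlinarith [Real.exp_pos (-2 * V x / A ^ 2), h, sq_nonneg (‖x‖ - 1),
        mul_pos (by nlinarith : (0:ℝ) < ‖x‖ ^ 2 - 1) (Real.exp_pos (-2 * V x / A ^ 2))]
  have heq : (fun x : Euc d => Real.exp (-2 * (V x - Vstar) / A ^ 2))
      = fun x => Real.exp (2 * Vstar / A ^ 2) * Real.exp (-2 * V x / A ^ 2) := by
    funext x
    rw [← Real.exp_add]
    congr 1
    field_simp
    ring
  rw [heq]
  exact hbase.const_mul _

lemma int_scale (hA : 0 < A) (hVc : Continuous V) (hVpos : ∀ x, 0 < V x)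
    (hlow : ∀ x, Vstar ≤ V x)
    (hint : Integrable (fun x : Euc d => ‖x‖ ^ 2 * Real.exp (-2 * V x / A ^ 2)))
    {a : ℝ} (ha : 0 < a) (haA : a ≤ A) :
    Integrable (fun x : Euc d => Real.exp (-2 * (V x - Vstar) / a ^ 2)) := by
  have hcont : Continuous fun x : Euc d => Real.exp (-2 * (V x - Vstar) / a ^ 2) :=
    Real.continuous_exp.comp ((continuous_const.mul (hVc.sub continuous_const)).div_const _)
  apply (int_master hA hVc hVpos hint (Vstar := Vstar)).mono' hcont.aestronglyMeasurable
  refine Filter.Eventually.of_forall fun x => ?_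
  rw [Real.norm_eq_abs, abs_of_pos (Real.exp_pos _), Real.exp_le_exp]
  rw [div_le_div_iff₀ (by positivity) (by positivity)]
  nlinarith [mul_nonneg (by linarith [hlow x] : (0:ℝ) ≤ V x - Vstar)
    (by nlinarith : (0:ℝ) ≤ A ^ 2 - a ^ 2)]

lemma int_half (hA : 0 < A) (hVc : Continuous V) (hVpos : ∀ x, 0 < V x)
    (hlow : ∀ x, Vstar ≤ V x)
    (hint : Integrable (fun x : Euc d => ‖x‖ ^ 2 * Real.exp (-2 * V x / A ^ 2)))
    {a : ℝ} (ha : 0 < a) (haA : a ≤ A / 2) :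
    Integrable (fun x : Euc d => Real.exp (-(V x - Vstar) / a ^ 2)) := by
  have hcont : Continuous fun x : Euc d => Real.exp (-(V x - Vstar) / a ^ 2) :=
    Real.continuous_exp.comp ((hVc.sub continuous_const).neg.div_const _)
  apply (int_master hA hVc hVpos hint (Vstar := Vstar)).mono' hcont.aestronglyMeasurable
  refine Filter.Eventually.of_forall fun x => ?_
  rw [Real.norm_eq_abs, abs_of_pos (Real.exp_pos _), Real.exp_le_exp]
  rw [div_le_div_iff₀ (by positivity) (by positivity)]
  nlinarith [mul_nonneg (by linarith [hlow x] : (0:ℝ) ≤ V x - Vstar)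
    (by nlinarith : (0:ℝ) ≤ A ^ 2 - 2 * a ^ 2)]

lemma int_wexp (hA : 0 < A) (hVc : Continuous V) (hVpos : ∀ x, 0 < V x)
    (hlow : ∀ x, Vstar ≤ V x)
    (hint : Integrable (fun x : Euc d => ‖x‖ ^ 2 * Real.exp (-2 * V x / A ^ 2)))
    {b : ℝ} (hb : 0 < b) (hbA : b ≤ A / 2) :
    Integrable (fun x : Euc d => (V x - Vstar) * Real.exp (-2 * (V x - Vstar) / b ^ 2)) := by
  have hcont : Continuous fun x : Euc d =>
      (V x - Vstar) * Real.exp (-2 * (V x - Vstar) / b ^ 2) :=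
    (hVc.sub continuous_const).mul
      (Real.continuous_exp.comp ((continuous_const.mul (hVc.sub continuous_const)).div_const _))
  apply ((int_half hA hVc hVpos hlow hint hb hbA).const_mul (b ^ 2)).mono'
    hcont.aestronglyMeasurable
  refine Filter.Eventually.of_forall fun x => ?_
  have hw : 0 ≤ V x - Vstar := by linarith [hlow x]
  rw [Real.norm_eq_abs, abs_of_nonneg (mul_nonneg hw (Real.exp_pos _).le)]
  exact aux_wexp hw hb

lemma int_mono (hA : 0 < A) (hVc : Continuous V) (hVpos : ∀ x, 0 < V x)
    (hlow : ∀ x, Vstar ≤ V x)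
    (hint : Integrable (fun x : Euc d => ‖x‖ ^ 2 * Real.exp (-2 * V x / A ^ 2)))
    {a b : ℝ} (ha : 0 < a) (hab : a ≤ b) (hbA : b ≤ A) :
    (∫ x : Euc d, Real.exp (-2 * (V x - Vstar) / a ^ 2))
      ≤ ∫ x : Euc d, Real.exp (-2 * (V x - Vstar) / b ^ 2) := by
  apply integral_mono (int_scale hA hVc hVpos hlow hint ha (hab.trans hbA))
    (int_scale hA hVc hVpos hlow hint (ha.trans_le hab) hbA)
  intro x
  rw [Real.exp_le_exp, div_le_div_iff₀ (by positivity) (by nlinarith : (0:ℝ) < b ^ 2)]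
  nlinarith [mul_nonneg (by linarith [hlow x] : (0:ℝ) ≤ V x - Vstar)
    (by nlinarith : (0:ℝ) ≤ b ^ 2 - a ^ 2)]

end Integr

set_option maxHeartbeats 1000000 in
lemma quad_lower {d : ℕ} (V : Euc d → ℝ) (Vstar : ℝ) (p : Euc d)
    (hd : 1 ≤ d) (hV : ContDiff ℝ 2 V)
    (hlow : ∀ x, Vstar ≤ V x) (hp : V p = Vstar)
    (hhess : ∀ v : Euc d, v ≠ 0 → 0 < hessQuad V p v) :
    ∃ r > 0, ∃ c > 0, ∀ x, dist x p < r → c * ‖x - p‖ ^ 2 ≤ V x - Vstar := by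
  classical
  set T : Euc d → ContinuousMultilinearMap ℝ (fun _ : Fin 2 => Euc d) ℝ :=
    fun x => iteratedFDeriv ℝ 2 V x with hT
  have hTc : Continuous T := hV.continuous_iteratedFDeriv (by exact_mod_cast le_rfl)
  -- the unit sphere is compact and nonempty
  have hu0 : (EuclideanSpace.single (⟨0, hd⟩ : Fin d) (1:ℝ)) ∈ Metric.sphere (0 : Euc d) 1 := by
    rw [mem_sphere_zero_iff_norm, EuclideanSpace.norm_single]
    norm_num
  have hconts : Continuous fun v : Euc d => T p ![v, v] := by
    apply (T p).cont.comp
    apply continuous_pi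
    intro i
    fin_cases i <;> simpa using continuous_id'
  obtain ⟨v0, hv0S, hv0min⟩ :=
    (isCompact_sphere (0 : Euc d) 1).exists_isMinOn ⟨_, hu0⟩ hconts.continuousOn
  set μ : ℝ := T p ![v0, v0] with hμdef
  have hv0norm : ‖v0‖ = 1 := mem_sphere_zero_iff_norm.1 hv0S
  have hμ : 0 < μ := hhess v0 (by intro h; rw [h] at hv0norm; simp at hv0norm)
  -- lower bound of the quadratic form at p
  have claim1 : ∀ v : Euc d, μ * ‖v‖ ^ 2 ≤ T p ![v, v] := by
    intro v
    rcases eq_or_ne v 0 with rfl | hv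
    · have : T p ![(0 : Euc d), 0] = 0 := by
        apply (T p).map_coord_zero (0 : Fin 2)
        simp
      simp [this]
    · set t : ℝ := ‖v‖ with ht
      have htpos : 0 < t := norm_pos_iff.2 hv
      set u : Euc d := t⁻¹ • v with hu
      have huS : u ∈ Metric.sphere (0 : Euc d) 1 := by
        rw [mem_sphere_zero_iff_norm, hu, norm_smul]
        rw [norm_inv, Real.norm_eq_abs, abs_of_pos htpos]
        field_simp
        exact ht.symm
      have hvu : v = t • u := by
        rw [hu, smul_smul]
        rw [mul_inv_cancel₀ htpos.ne']
        simp
      have hform : T p ![v, v] = t ^ 2 * T p ![u, u] := by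
        have h1 : ![v, v] = fun i : Fin 2 => t • (![u, u] i) := by
          funext i
          fin_cases i <;> simp [hvu]
        rw [h1]
        have := (T p).map_smul_univ (fun _ : Fin 2 => t) ![u, u]
        rw [this]
        simp [smul_eq_mul, pow_two]
      rw [hform]
      have hmin : μ ≤ T p ![u, u] := hv0min huS
      have : μ * ‖v‖ ^ 2 = ‖v‖ ^ 2 * μ := mul_comm _ _
      rw [this]
      have ht2 : ‖v‖ ^ 2 = t ^ 2 := by rw [ht]
      rw [ht2]
      exact mul_le_mul_of_nonneg_left hmin (by positivity)
  -- choose r by continuity of T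
  obtain ⟨r, hr, hrT⟩ : ∃ r > 0, ∀ y : Euc d, dist y p < r → ‖T y - T p‖ < μ / 2 := by
    have h := Metric.continuousAt_iff.1 (hTc.continuousAt (x := p)) (μ / 2) (half_pos hμ)
    obtain ⟨δ, hδ, hδ'⟩ := h
    exact ⟨δ, hδ, fun y hy => by rw [← dist_eq_norm]; exact hδ' hy⟩
  -- uniform lower bound of the quadratic form on the ball
  have claim2 : ∀ y : Euc d, dist y p < r → ∀ h : Euc d, μ / 2 * ‖h‖ ^ 2 ≤ T y ![h, h] := by
    intro y hy h
    have h1 : T y ![h, h] = T p ![h, h] + (T y - T p) ![h, h] := by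
      simp [ContinuousMultilinearMap.sub_apply]
    have h2 : |(T y - T p) ![h, h]| ≤ ‖T y - T p‖ * (‖h‖ * ‖h‖) := by
      have h3 := (T y - T p).le_opNorm ![h, h]
      have h4 : (∏ i : Fin 2, ‖![h, h] i‖) = ‖h‖ * ‖h‖ := by
        rw [Fin.prod_univ_two]; simp
      rw [h4] at h3
      simpa [Real.norm_eq_abs] using h3
    have h4 := claim1 h
    have h5 := hrT y hy
    have h6 : ‖T y - T p‖ * (‖h‖ * ‖h‖) ≤ μ / 2 * (‖h‖ * ‖h‖) :=
      mul_le_mul_of_nonneg_right h5.le (by positivity)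
    have h7 : -(μ / 2 * ‖h‖ ^ 2) ≤ (T y - T p) ![h, h] := by
      have := neg_abs_le ((T y - T p) ![h, h])
      nlinarith [abs_nonneg ((T y - T p) ![h, h])]
    nlinarith
  refine ⟨r, hr, μ / 4, by positivity, fun x hx => ?_⟩
  set h : Euc d := x - p with hh
  have hdiff : Differentiable ℝ V := hV.differentiable (by norm_num)
  set φ : Euc d → (Euc d →L[ℝ] ℝ) := fderiv ℝ V with hφ
  have hφc : ContDiff ℝ 1 φ := hV.fderiv_right (by norm_num)
  have hφd : Differentiable ℝ φ := hφc.differentiable (by norm_num)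
  have hL : ∀ t : ℝ, HasDerivAt (fun t : ℝ => p + t • h) h t := by
    intro t
    simpa using (((hasDerivAt_id t).smul_const h).const_add p)
  have hg : ∀ t : ℝ, HasDerivAt (fun t : ℝ => V (p + t • h)) (φ (p + t • h) h) t :=
    fun t => ((hdiff _).hasFDerivAt).comp_hasDerivAt t (hL t)
  have hg1 : ∀ t : ℝ, HasDerivAt (fun t : ℝ => φ (p + t • h) h)
      (T (p + t • h) ![h, h]) t := by
    intro t
    have h1 : HasDerivAt (fun t : ℝ => φ (p + t • h)) (fderiv ℝ φ (p + t • h) h) t :=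
      ((hφd _).hasFDerivAt).comp_hasDerivAt t (hL t)
    have h2 := h1.clm_apply (hasDerivAt_const t h)
    have h3 : T (p + t • h) ![h, h] = fderiv ℝ φ (p + t • h) h h := by
      rw [hT, iteratedFDeriv_two_apply]
      simp [hφ]
    rw [h3]
    simpa using h2
  have hφp : φ p = 0 := by
    apply IsLocalMin.fderiv_eq_zero
    apply Filter.Eventually.of_forall
    intro y
    rw [hp]
    exact hlow y
  have hball : ∀ t : ℝ, t ∈ Set.Icc (0:ℝ) 1 → dist (p + t • h) p < r := by
    intro t ht
    rw [dist_eq_norm]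
    have : p + t • h - p = t • h := by abel
    rw [this, norm_smul, Real.norm_eq_abs, abs_of_nonneg ht.1]
    have h1 : ‖h‖ = dist x p := by rw [hh, dist_eq_norm]
    nlinarith [ht.2, norm_nonneg h, hx, h1 ▸ hx]
  -- F is monotone on [0,1]
  set F : ℝ → ℝ := fun t => φ (p + t • h) h - μ / 2 * ‖h‖ ^ 2 * t with hF
  have hFd : ∀ t : ℝ, HasDerivAt F (T (p + t • h) ![h, h] - μ / 2 * ‖h‖ ^ 2) t := by
    intro t
    have h1 := (hg1 t).sub (((hasDerivAt_id t).const_mul (μ / 2 * ‖h‖ ^ 2)))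
    simp at h1 ⊢; exact h1
  have hFmono : MonotoneOn F (Set.Icc (0:ℝ) 1) := by
    apply monotoneOn_of_deriv_nonneg (convex_Icc 0 1)
      (fun t _ => (hFd t).differentiableAt.continuousAt.continuousWithinAt)
      (fun t _ => (hFd t).differentiableAt.differentiableWithinAt)
    intro t ht
    rw [interior_Icc] at ht
    rw [(hFd t).deriv]
    have := claim2 (p + t • h) (hball t ⟨ht.1.le, ht.2.le⟩) h
    linarith
  have hF0 : F 0 = 0 := by
    have h0 : p + (0:ℝ) • h = p := by simp
    simp only [hF, h0, hφp]
    simp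
  -- G is monotone on [0,1]
  set G : ℝ → ℝ := fun t => V (p + t • h) - μ / 4 * ‖h‖ ^ 2 * t ^ 2 with hG
  have hGd : ∀ t : ℝ, HasDerivAt G (φ (p + t • h) h - μ / 2 * ‖h‖ ^ 2 * t) t := by
    intro t
    have h1 := (hg t).sub ((hasDerivAt_pow 2 t).const_mul (μ / 4 * ‖h‖ ^ 2))
    have h2 : φ (p + t • h) h - μ / 4 * ‖h‖ ^ 2 * (2 * t ^ 1) =
        φ (p + t • h) h - μ / 2 * ‖h‖ ^ 2 * t := by ring
    rw [← h2]
    simp at h1 ⊢; exact h1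
  have hGmono : MonotoneOn G (Set.Icc (0:ℝ) 1) := by
    apply monotoneOn_of_deriv_nonneg (convex_Icc 0 1)
      (fun t _ => (hGd t).differentiableAt.continuousAt.continuousWithinAt)
      (fun t _ => (hGd t).differentiableAt.differentiableWithinAt)
    intro t ht
    rw [interior_Icc] at ht
    rw [(hGd t).deriv]
    have h1 : F 0 ≤ F t := hFmono (by norm_num) ⟨ht.1.le, ht.2.le⟩ ht.1.le
    rw [hF0] at h1
    have h2 : φ (p + t • h) h - μ / 2 * ‖h‖ ^ 2 * t ≥ 0 := by
      simp only [hF] at h1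
      nlinarith
    linarith
  have hfinal := hGmono (Set.mem_Icc.2 ⟨le_rfl, zero_le_one⟩) (Set.mem_Icc.2 ⟨zero_le_one, le_rfl⟩)
    zero_le_one
  simp only [hG] at hfinal
  have h0 : p + (0:ℝ) • h = p := by simp
  have h1 : p + (1:ℝ) • h = x := by rw [one_smul, hh]; abel
  rw [h0, h1] at hfinal
  rw [hp] at hfinal
  have : ‖x - p‖ = ‖h‖ := by rw [hh]
  rw [this]
  nlinarith [hfinal]

lemma escape {d m : ℕ} (V : Euc d → ℝ) (Vstar : ℝ) (xs : Fin m → Euc d)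
    (hVc : Continuous V) (hVco : Tendsto V (cocompact (Euc d)) atTop)
    (hlow : ∀ x, Vstar ≤ V x)
    (hargmin : ∀ x, V x = Vstar → ∃ i, x = xs i)
    {r : ℝ} (hr : 0 < r) :
    ∃ δ > 0, ∀ x : Euc d, (∀ i, r ≤ dist x (xs i)) → δ ≤ V x - Vstar := by
  have h1 : ∀ᶠ x in cocompact (Euc d), Vstar + 1 ≤ V x := hVco.eventually_ge_atTop _
  obtain ⟨K, hK, hKs⟩ := mem_cocompact.1 h1
  set S : Set (Euc d) := {x | x ∈ K ∧ ∀ i, r ≤ dist x (xs i)} with hSdef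
  have hScl : IsClosed S := by
    have : S = K ∩ ⋂ i, {x | r ≤ dist x (xs i)} := by
      ext x; simp [hSdef, Set.mem_iInter]
    rw [this]
    exact hK.isClosed.inter (isClosed_iInter fun i =>
      isClosed_le continuous_const ((continuous_id.dist continuous_const)))
  have hSc : IsCompact S := hK.of_isClosed_subset hScl (fun x hx => hx.1)
  rcases S.eq_empty_or_nonempty with hSe | hSne
  · refine ⟨1, one_pos, fun x hx => ?_⟩
    have hxK : x ∉ K := by
      intro hxK
      have : x ∈ S := ⟨hxK, hx⟩
      rw [hSe] at this
      exact this
    have := hKs hxK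
    simp only [Set.mem_setOf_eq] at this
    linarith
  · obtain ⟨x0, hx0S, hx0min⟩ := hSc.exists_isMinOn hSne hVc.continuousOn
    have hx0 : Vstar < V x0 := by
      rcases lt_or_eq_of_le (hlow x0) with h | h
      · exact h
      · exfalso
        obtain ⟨i, hi⟩ := hargmin x0 h.symm
        have := hx0S.2 i
        rw [hi] at this
        simp at this
        linarith
    refine ⟨min 1 (V x0 - Vstar), lt_min one_pos (by linarith), fun x hx => ?_⟩
    by_cases hxK : x ∈ K
    · have hxS : x ∈ S := ⟨hxK, hx⟩
      have := hx0min hxS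
      calc min 1 (V x0 - Vstar) ≤ V x0 - Vstar := min_le_right _ _
        _ ≤ V x - Vstar := by simp only [Set.mem_setOf_eq] at this ⊢; linarith [this]
    · have := hKs hxK
      simp only [Set.mem_setOf_eq] at this
      calc min 1 (V x0 - Vstar) ≤ 1 := min_le_left _ _
        _ ≤ V x - Vstar := by linarith

set_option maxHeartbeats 1000000 in
lemma Jbound {d m : ℕ} {V : Euc d → ℝ} {A Vstar : ℝ} {xs : Fin m → Euc d}
    (hA : 0 < A) (hVc : Continuous V) (hVpos : ∀ x, 0 < V x) (hlow : ∀ x, Vstar ≤ V x)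
    (hint : Integrable (fun x : Euc d => ‖x‖ ^ 2 * Real.exp (-2 * V x / A ^ 2)))
    {r c δ : ℝ} (hr : 0 < r) (hc : 0 < c) (hδ : 0 < δ)
    (hquad : ∀ i x, dist x (xs i) < r → c * ‖x - xs i‖ ^ 2 ≤ V x - Vstar)
    (hesc : ∀ x : Euc d, (∀ i, r ≤ dist x (xs i)) → δ ≤ V x - Vstar) :
    ∃ C0 : ℝ, 0 ≤ C0 ∧ ∀ a : ℝ, 0 < a → a ≤ A / 2 →
      (∫ x : Euc d, Real.exp (-(V x - Vstar) / a ^ 2)) ≤ C0 * a ^ d := by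
  set IA : ℝ := ∫ x : Euc d, Real.exp (-2 * (V x - Vstar) / A ^ 2) with hIA
  have hIA0 : 0 ≤ IA := integral_nonneg fun x => (Real.exp_pos _).le
  set D : ℝ := (d.factorial : ℝ) * (2 / δ) ^ d * (A / 2) ^ d with hD
  have hD0 : 0 ≤ D := by positivity
  refine ⟨m * (Real.pi / c) ^ ((d : ℝ) / 2) + D * IA, by positivity, fun a ha haA => ?_⟩
  have ha2 : (0 : ℝ) < a ^ 2 := by positivity
  have hb : (0 : ℝ) < c / a ^ 2 := by positivity
  -- the majorant
  set M : Euc d → ℝ := fun x =>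
    (∑ i : Fin m, Set.indicator (Metric.ball (xs i) r)
        (fun y => Real.exp (-(c / a ^ 2) * ‖y - xs i‖ ^ 2)) x)
      + D * a ^ d * Real.exp (-2 * (V x - Vstar) / A ^ 2) with hM
  have hgauss_shift : ∀ i : Fin m,
      Integrable (fun y : Euc d => Real.exp (-(c / a ^ 2) * ‖y - xs i‖ ^ 2)) := fun i =>
    (integrable_gauss hb).comp_sub_right (xs i)
  have hMint : Integrable M := by
    apply Integrable.add
    · apply integrable_finset_sum
      intro i _
      exact (hgauss_shift i).indicator Metric.isOpen_ball.measurableSet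
    · exact ((int_master hA hVc hVpos hint (Vstar := Vstar)).const_mul _)
  -- pointwise bound
  have hpt : ∀ x : Euc d, Real.exp (-(V x - Vstar) / a ^ 2) ≤ M x := by
    intro x
    have hsum0 : (0 : ℝ) ≤ ∑ i : Fin m, Set.indicator (Metric.ball (xs i) r)
        (fun y => Real.exp (-(c / a ^ 2) * ‖y - xs i‖ ^ 2)) x :=
      Finset.sum_nonneg fun i _ => Set.indicator_nonneg (fun y _ => (Real.exp_pos _).le) x
    by_cases hx : ∃ i, dist x (xs i) < r
    · obtain ⟨i, hxi⟩ := hx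
      have hmem : x ∈ Metric.ball (xs i) r := Metric.mem_ball.2 hxi
      have h1 : Real.exp (-(V x - Vstar) / a ^ 2)
          ≤ Real.exp (-(c / a ^ 2) * ‖x - xs i‖ ^ 2) := by
        rw [Real.exp_le_exp]
        have e1 : -(c / a ^ 2) * ‖x - xs i‖ ^ 2 = -(c * ‖x - xs i‖ ^ 2) / a ^ 2 := by ring
        rw [e1, div_le_div_iff₀ ha2 ha2]
        nlinarith [hquad i x hxi]
      have h2 : Real.exp (-(c / a ^ 2) * ‖x - xs i‖ ^ 2)
          = Set.indicator (Metric.ball (xs i) r)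
            (fun y => Real.exp (-(c / a ^ 2) * ‖y - xs i‖ ^ 2)) x :=
        (Set.indicator_of_mem hmem fun y => Real.exp (-(c / a ^ 2) * ‖y - xs i‖ ^ 2)).symm
      have h3 : Set.indicator (Metric.ball (xs i) r)
            (fun y => Real.exp (-(c / a ^ 2) * ‖y - xs i‖ ^ 2)) x
          ≤ ∑ j : Fin m, Set.indicator (Metric.ball (xs j) r)
            (fun y => Real.exp (-(c / a ^ 2) * ‖y - xs j‖ ^ 2)) x :=
        Finset.single_le_sum
          (f := fun j => Set.indicator (Metric.ball (xs j) r)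
            (fun y => Real.exp (-(c / a ^ 2) * ‖y - xs j‖ ^ 2)) x)
          (fun j _ => Set.indicator_nonneg (fun y _ => (Real.exp_pos _).le) x)
          (Finset.mem_univ i)
      have h4 : (0:ℝ) ≤ D * a ^ d * Real.exp (-2 * (V x - Vstar) / A ^ 2) := by positivity
      rw [hM]
      calc Real.exp (-(V x - Vstar) / a ^ 2)
          ≤ Set.indicator (Metric.ball (xs i) r)
            (fun y => Real.exp (-(c / a ^ 2) * ‖y - xs i‖ ^ 2)) x := h2 ▸ h1
        _ ≤ _ := by dsimp only; linarith [h3, h4]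
    · push_neg at hx
      have hδx : δ ≤ V x - Vstar := hesc x fun i => hx i
      have hw0 : 0 ≤ V x - Vstar := by linarith
      -- step 1 : split the exponential
      have h1 : Real.exp (-(V x - Vstar) / a ^ 2)
          ≤ Real.exp (-δ / (2 * a ^ 2)) * Real.exp (-(V x - Vstar) / (2 * a ^ 2)) := by
        rw [← Real.exp_add, Real.exp_le_exp]
        have e1 : -(V x - Vstar) / a ^ 2 = (-2 * (V x - Vstar)) / (2 * a ^ 2) := by
          rw [div_eq_div_iff ha2.ne' (by positivity)]; ring
        rw [e1, ← add_div, div_le_div_iff₀ (by positivity) (by positivity)]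
        nlinarith
      -- step 2 : second factor dominated by the master function
      have h2 : Real.exp (-(V x - Vstar) / (2 * a ^ 2)) ≤ Real.exp (-2 * (V x - Vstar) / A ^ 2) := by
        rw [Real.exp_le_exp, div_le_div_iff₀ (by positivity) (by positivity)]
        nlinarith [mul_nonneg hw0 (by nlinarith : (0:ℝ) ≤ A ^ 2 - 4 * a ^ 2)]
      -- step 3 : first factor is ≤ D a^d
      have h3 : Real.exp (-δ / (2 * a ^ 2)) ≤ D * a ^ d := by
        have ht : (0:ℝ) < δ / (2 * a ^ 2) := by positivity
        have h4 := aux_exp_neg_le ht d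
        have e3 : -δ / (2 * a ^ 2) = -(δ / (2 * a ^ 2)) := by ring
        rw [e3]
        refine h4.trans ?_
        have e4 : (d.factorial : ℝ) / (δ / (2 * a ^ 2)) ^ d
            = (d.factorial : ℝ) * ((2 / δ) ^ d * a ^ d * a ^ d) := by
          have h7 : ((a:ℝ) ^ 2) ^ d = a ^ d * a ^ d := by
            rw [← pow_mul, ← pow_add]
            congr 1
            ring
          rw [div_pow, div_div_eq_mul_div, mul_pow, h7]
          field_simp
          try ring
          try simp
          exact mul_inv_cancel₀ (pow_ne_zero _ hδ.ne')
        rw [e4, hD]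
        have h5 : a ^ d ≤ (A / 2) ^ d := pow_le_pow_left₀ ha.le haA d
        have h6 : (0:ℝ) ≤ (d.factorial : ℝ) * ((2 / δ) ^ d) * a ^ d := by positivity
        calc (d.factorial : ℝ) * ((2 / δ) ^ d * a ^ d * a ^ d)
            = ((d.factorial : ℝ) * (2 / δ) ^ d * a ^ d) * a ^ d := by ring
          _ ≤ ((d.factorial : ℝ) * (2 / δ) ^ d * (A / 2) ^ d) * a ^ d := by
              apply mul_le_mul_of_nonneg_right _ (by positivity)
              apply mul_le_mul_of_nonneg_left h5 (by positivity)
          _ = (d.factorial : ℝ) * (2 / δ) ^ d * (A / 2) ^ d * a ^ d := rfl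
      have hfinal : Real.exp (-(V x - Vstar) / a ^ 2)
          ≤ D * a ^ d * Real.exp (-2 * (V x - Vstar) / A ^ 2) := by
        calc Real.exp (-(V x - Vstar) / a ^ 2)
            ≤ Real.exp (-δ / (2 * a ^ 2)) * Real.exp (-(V x - Vstar) / (2 * a ^ 2)) := h1
          _ ≤ (D * a ^ d) * Real.exp (-2 * (V x - Vstar) / A ^ 2) := by
              apply mul_le_mul h3 h2 (Real.exp_pos _).le (by positivity)
      rw [hM]
      dsimp only
      linarith [hsum0, hfinal]
  -- integrate the pointwise bound
  have hJM : (∫ x : Euc d, Real.exp (-(V x - Vstar) / a ^ 2)) ≤ ∫ x, M x :=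
    integral_mono (int_half hA hVc hVpos hlow hint ha haA) hMint hpt
  -- compute / bound the integral of M
  have hMval : (∫ x, M x) ≤ m * ((Real.pi / c) ^ ((d : ℝ) / 2) * a ^ d) + D * a ^ d * IA := by
    rw [hM]
    rw [integral_add (integrable_finset_sum _ fun i _ =>
      (hgauss_shift i).indicator Metric.isOpen_ball.measurableSet)
      (((int_master hA hVc hVpos hint (Vstar := Vstar)).const_mul _))]
    have hterm : ∀ i : Fin m,
        (∫ x, Set.indicator (Metric.ball (xs i) r)
          (fun y => Real.exp (-(c / a ^ 2) * ‖y - xs i‖ ^ 2)) x)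
        ≤ (Real.pi / c) ^ ((d : ℝ) / 2) * a ^ d := by
      intro i
      have hle : ∀ x, Set.indicator (Metric.ball (xs i) r)
          (fun y => Real.exp (-(c / a ^ 2) * ‖y - xs i‖ ^ 2)) x
          ≤ Real.exp (-(c / a ^ 2) * ‖x - xs i‖ ^ 2) :=
        fun x => Set.indicator_le_self' (fun y _ => (Real.exp_pos _).le) x
      have h1 : (∫ x, Set.indicator (Metric.ball (xs i) r)
          (fun y => Real.exp (-(c / a ^ 2) * ‖y - xs i‖ ^ 2)) x)
          ≤ ∫ x : Euc d, Real.exp (-(c / a ^ 2) * ‖x - xs i‖ ^ 2) :=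
        integral_mono ((hgauss_shift i).indicator Metric.isOpen_ball.measurableSet)
          (hgauss_shift i) hle
      have h2 : (∫ x : Euc d, Real.exp (-(c / a ^ 2) * ‖x - xs i‖ ^ 2))
          = ∫ x : Euc d, Real.exp (-(c / a ^ 2) * ‖x‖ ^ 2) :=
        integral_sub_right_eq_self (fun y : Euc d => Real.exp (-(c / a ^ 2) * ‖y‖ ^ 2)) (xs i)
      have h3 : (∫ x : Euc d, Real.exp (-(c / a ^ 2) * ‖x‖ ^ 2))
          = (Real.pi / (c / a ^ 2)) ^ ((d : ℝ) / 2) := integral_gauss hb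
      have h4 : (Real.pi / (c / a ^ 2)) ^ ((d : ℝ) / 2)
          = (Real.pi / c) ^ ((d : ℝ) / 2) * a ^ d := by
        have e1 : Real.pi / (c / a ^ 2) = (Real.pi / c) * a ^ 2 := by
          field_simp
        rw [e1, Real.mul_rpow (by positivity) (by positivity)]
        congr 1
        rw [← Real.rpow_natCast a 2, ← Real.rpow_mul ha.le]
        rw [show ((2:ℕ):ℝ) * ((d:ℝ)/2) = (d:ℝ) by push_cast; ring]
        exact Real.rpow_natCast a d
      rw [h2, h3, h4] at h1
      exact h1
    have hsum : (∫ x, ∑ i : Fin m, Set.indicator (Metric.ball (xs i) r)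
        (fun y => Real.exp (-(c / a ^ 2) * ‖y - xs i‖ ^ 2)) x)
        ≤ m * ((Real.pi / c) ^ ((d : ℝ) / 2) * a ^ d) := by
      rw [integral_finset_sum _ fun i _ =>
        (hgauss_shift i).indicator Metric.isOpen_ball.measurableSet]
      calc (∑ i : Fin m, ∫ x, Set.indicator (Metric.ball (xs i) r)
            (fun y => Real.exp (-(c / a ^ 2) * ‖y - xs i‖ ^ 2)) x)
          ≤ ∑ _i : Fin m, (Real.pi / c) ^ ((d : ℝ) / 2) * a ^ d :=
            Finset.sum_le_sum fun i _ => hterm i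
        _ = m * ((Real.pi / c) ^ ((d : ℝ) / 2) * a ^ d) := by
            rw [Finset.sum_const, Finset.card_univ, Fintype.card_fin]
            simp [nsmul_eq_mul]
    have hsecond : (∫ x : Euc d, D * a ^ d * Real.exp (-2 * (V x - Vstar) / A ^ 2))
        = D * a ^ d * IA := by
      rw [integral_const_mul, hIA]
    linarith [hsum, le_of_eq hsecond, hsecond.le, hsecond.ge]
  calc (∫ x : Euc d, Real.exp (-(V x - Vstar) / a ^ 2)) ≤ ∫ x, M x := hJM
    _ ≤ m * ((Real.pi / c) ^ ((d : ℝ) / 2) * a ^ d) + D * a ^ d * IA := hMval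
    _ = (m * (Real.pi / c) ^ ((d : ℝ) / 2) + D * IA) * a ^ d := by ring

set_option maxHeartbeats 1000000 in
/-- `a ↦ Z_a^{−1}` is non-decreasing on `(0, A]`, and there is `C > 0` with
`0 ≤ Z_{a_n}^{−1} − Z_{a_{n+1}}^{−1} ≤ C a_{n+1}^{d−1}(a_n − a_{n+1})` for all `n ≥ 1`. -/
theorem normalization_monotone_and_diff_le {d m : ℕ} (V : Euc d → ℝ) (A C_T β Vstar : ℝ) (xs : Fin m → Euc d)
    (hd : 1 ≤ d) (hA : 0 < A) (hCT : 0 < C_T) (hβ : 0 < β)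
    (hV : ContDiff ℝ 2 V) (hVpos : ∀ x, 0 < V x)
    (hVco : Tendsto V (cocompact (Euc d)) atTop)
    (hm : 1 ≤ m) (hinj : Function.Injective xs)
    (hVstar : 0 < Vstar)
    (hlow : ∀ x, Vstar ≤ V x) (hxs : ∀ i, V (xs i) = Vstar)
    (hargmin : ∀ x, V x = Vstar → ∃ i, x = xs i)
    (hhess : ∀ i, ∀ v : Euc d, v ≠ 0 → 0 < hessQuad V (xs i) v)
    (hint : Integrable (fun x : Euc d => ‖x‖ ^ 2 * Real.exp (-2 * V x / A ^ 2)))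
    :
    MonotoneOn (fun a : ℝ => ∫ x : Euc d, Real.exp (-2 * (V x - Vstar) / a ^ 2))
        (Set.Ioc (0 : ℝ) A) ∧
      ∃ C > 0, ∀ n : ℕ, 1 ≤ n →
        0 ≤ (∫ x : Euc d, Real.exp (-2 * (V x - Vstar) / aSeq A C_T β n ^ 2)) -
            (∫ x : Euc d, Real.exp (-2 * (V x - Vstar) / aSeq A C_T β (n + 1) ^ 2)) ∧
        (∫ x : Euc d, Real.exp (-2 * (V x - Vstar) / aSeq A C_T β n ^ 2)) -
            (∫ x : Euc d, Real.exp (-2 * (V x - Vstar) / aSeq A C_T β (n + 1) ^ 2)) ≤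
          C * aSeq A C_T β (n + 1) ^ (d - 1) * (aSeq A C_T β n - aSeq A C_T β (n + 1)) := by
  classical
  have hVc : Continuous V := hV.continuous
  -- Part 1 : monotonicity
  have hmono : MonotoneOn (fun a : ℝ => ∫ x : Euc d, Real.exp (-2 * (V x - Vstar) / a ^ 2))
      (Set.Ioc (0 : ℝ) A) := by
    intro a ha b hb hab
    exact int_mono hA hVc hVpos hlow hint ha.1 hab hb.2
  refine ⟨hmono, ?_⟩
  -- Part 2 : quantitative bound along the sequence
  have hquadAll : ∀ i : Fin m, ∃ r > 0, ∃ c > 0, ∀ x, dist x (xs i) < r →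
      c * ‖x - xs i‖ ^ 2 ≤ V x - Vstar := fun i =>
    quad_lower V Vstar (xs i) hd hV hlow (hxs i) (fun v hv => hhess i v hv)
  choose rr hrr cc hcc hqq using hquadAll
  have hne : Nonempty (Fin m) := ⟨⟨0, hm⟩⟩
  have hFne : (Finset.univ : Finset (Fin m)).Nonempty := Finset.univ_nonempty
  set r0 : ℝ := Finset.univ.inf' hFne rr with hr0def
  set c0 : ℝ := Finset.univ.inf' hFne cc with hc0def
  have hr0 : 0 < r0 := (Finset.lt_inf'_iff hFne).2 fun i _ => hrr i
  have hc0 : 0 < c0 := (Finset.lt_inf'_iff hFne).2 fun i _ => hcc i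
  have hq0 : ∀ i x, dist x (xs i) < r0 → c0 * ‖x - xs i‖ ^ 2 ≤ V x - Vstar := by
    intro i x hx
    have h1 := hqq i x (lt_of_lt_of_le hx (Finset.inf'_le _ (Finset.mem_univ i)))
    have h2 : c0 ≤ cc i := Finset.inf'_le _ (Finset.mem_univ i)
    have h3 : c0 * ‖x - xs i‖ ^ 2 ≤ cc i * ‖x - xs i‖ ^ 2 :=
      mul_le_mul_of_nonneg_right h2 (by positivity)
    linarith
  obtain ⟨δ, hδ, hesc⟩ := escape V Vstar xs hVc hVco hlow hargmin hr0
  obtain ⟨C0, hC00, hJ⟩ := Jbound hA hVc hVpos hlow hint hr0 hc0 hδ hq0 hesc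
  -- the ratio constant
  set K : ℝ := 1 + (1 + β) * Real.log 2 with hKdef
  have hlog2 : 0 < Real.log 2 := Real.log_pos (by norm_num)
  have hK1 : 1 ≤ K := by nlinarith
  have hsKle : Real.sqrt K ≤ K := by
    calc Real.sqrt K ≤ Real.sqrt (K ^ 2) := Real.sqrt_le_sqrt (by nlinarith)
      _ = K := Real.sqrt_sq (by linarith)
  set C1 : ℝ := 4 * C0 * K ^ (d + 1) with hC1def
  have hC10 : 0 ≤ C1 := by
    apply mul_nonneg (mul_nonneg (by norm_num) hC00) (pow_nonneg (by linarith) _)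
  obtain ⟨N, hN1, hNsmall⟩ := aSeq_small hA hCT hβ
  -- nonnegativity of the increments
  have hnonneg : ∀ n : ℕ,
      0 ≤ (∫ x : Euc d, Real.exp (-2 * (V x - Vstar) / aSeq A C_T β n ^ 2)) -
        (∫ x : Euc d, Real.exp (-2 * (V x - Vstar) / aSeq A C_T β (n + 1) ^ 2)) := by
    intro n
    have h1 := int_mono hA hVc hVpos hlow hint
      (aSeq_pos hA hCT hβ (n + 1)) (aSeq_anti hA hCT hβ n).le (aSeq_le_A hA hCT hβ n)
    linarith
  -- the key estimate in the small-a regime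
  have hkey : ∀ n : ℕ, 1 ≤ n → aSeq A C_T β n ≤ A / 2 →
      (∫ x : Euc d, Real.exp (-2 * (V x - Vstar) / aSeq A C_T β n ^ 2)) -
        (∫ x : Euc d, Real.exp (-2 * (V x - Vstar) / aSeq A C_T β (n + 1) ^ 2)) ≤
      C1 * aSeq A C_T β (n + 1) ^ (d - 1) * (aSeq A C_T β n - aSeq A C_T β (n + 1)) := by
    intro n hn hsmall
    set b : ℝ := aSeq A C_T β n with hbdef
    set s : ℝ := aSeq A C_T β (n + 1) with hsdef
    have hb0 : 0 < b := aSeq_pos hA hCT hβ n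
    have hs0 : 0 < s := aSeq_pos hA hCT hβ (n + 1)
    have hsb : s < b := aSeq_anti hA hCT hβ n
    have hbA2 : b ≤ A / 2 := hsmall
    have hbA : b ≤ A := by linarith
    have hsA : s ≤ A := by linarith
    have hratio : b ≤ Real.sqrt K * s := aSeq_ratio hA hCT hβ hn
    -- pointwise estimate
    have hptw : ∀ x : Euc d, Real.exp (-2 * (V x - Vstar) / b ^ 2)
        - Real.exp (-2 * (V x - Vstar) / s ^ 2)
        ≤ (4 * (b - s) * b / s ^ 2) * Real.exp (-(V x - Vstar) / b ^ 2) := by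
      intro x
      have hw0 : 0 ≤ V x - Vstar := by linarith [hlow x]
      have hXY : 2 * (V x - Vstar) / b ^ 2 ≤ 2 * (V x - Vstar) / s ^ 2 := by
        rw [div_le_div_iff₀ (by positivity) (by positivity)]
        nlinarith [mul_nonneg hw0 (by nlinarith : (0:ℝ) ≤ b ^ 2 - s ^ 2)]
      have h1 := aux_exp_sub_exp hXY
      have e1 : -(2 * (V x - Vstar) / b ^ 2) = -2 * (V x - Vstar) / b ^ 2 := by ring
      have e2 : -(2 * (V x - Vstar) / s ^ 2) = -2 * (V x - Vstar) / s ^ 2 := by ring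
      rw [e1, e2] at h1
      have h2 : 2 * (V x - Vstar) / s ^ 2 - 2 * (V x - Vstar) / b ^ 2
          ≤ 4 * (b - s) * (V x - Vstar) / (b * s ^ 2) := by
        rw [div_sub_div _ _ (by positivity) (by positivity),
          div_le_div_iff₀ (by positivity) (by positivity)]
        nlinarith [mul_nonneg (mul_nonneg (mul_nonneg hw0 (sq_nonneg (b - s)))
          (sq_nonneg s)) hb0.le]
      have h3 : (2 * (V x - Vstar) / s ^ 2 - 2 * (V x - Vstar) / b ^ 2)
            * Real.exp (-2 * (V x - Vstar) / b ^ 2)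
          ≤ (4 * (b - s) / (b * s ^ 2))
            * ((V x - Vstar) * Real.exp (-2 * (V x - Vstar) / b ^ 2)) := by
        have h3a := mul_le_mul_of_nonneg_right h2 (Real.exp_pos (-2 * (V x - Vstar) / b ^ 2)).le
        have e3 : 4 * (b - s) * (V x - Vstar) / (b * s ^ 2)
              * Real.exp (-2 * (V x - Vstar) / b ^ 2)
            = (4 * (b - s) / (b * s ^ 2))
              * ((V x - Vstar) * Real.exp (-2 * (V x - Vstar) / b ^ 2)) := by ring
        linarith [e3 ▸ h3a]
      have h4 : (V x - Vstar) * Real.exp (-2 * (V x - Vstar) / b ^ 2)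
          ≤ b ^ 2 * Real.exp (-(V x - Vstar) / b ^ 2) := aux_wexp hw0 hb0
      have hcoef : (0:ℝ) ≤ 4 * (b - s) / (b * s ^ 2) := by
        apply div_nonneg (by linarith) (by positivity)
      have h5 := mul_le_mul_of_nonneg_left h4 hcoef
      have e5 : (4 * (b - s) / (b * s ^ 2)) * (b ^ 2 * Real.exp (-(V x - Vstar) / b ^ 2))
          = (4 * (b - s) * b / s ^ 2) * Real.exp (-(V x - Vstar) / b ^ 2) := by
        field_simp
      linarith [e5 ▸ h5]
    -- integrate
    have hint_b := int_scale hA hVc hVpos hlow hint hb0 hbA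
    have hint_s := int_scale hA hVc hVpos hlow hint hs0 hsA
    have hint_half := int_half hA hVc hVpos hlow hint hb0 hbA2
    have hint_rhs := hint_half.const_mul (4 * (b - s) * b / s ^ 2)
    have hmono2 : (∫ x : Euc d, Real.exp (-2 * (V x - Vstar) / b ^ 2)) -
        (∫ x : Euc d, Real.exp (-2 * (V x - Vstar) / s ^ 2))
        ≤ 4 * (b - s) * b / s ^ 2 * ∫ x : Euc d, Real.exp (-(V x - Vstar) / b ^ 2) := by
      rw [← integral_sub hint_b hint_s, ← integral_const_mul]
      exact integral_mono (hint_b.sub hint_s) hint_rhs hptw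
    have hJb := hJ b hb0 hbA2
    have hcoef2 : (0:ℝ) ≤ 4 * (b - s) * b / s ^ 2 := by
      apply div_nonneg (by nlinarith) (by positivity)
    have h6 : 4 * (b - s) * b / s ^ 2 * ∫ x : Euc d, Real.exp (-(V x - Vstar) / b ^ 2)
        ≤ 4 * (b - s) * b / s ^ 2 * (C0 * b ^ d) := mul_le_mul_of_nonneg_left hJb hcoef2
    -- numeric estimate
    have hbs : (0:ℝ) ≤ b - s := by linarith
    have hpow : b ^ (d + 1) ≤ K ^ (d + 1) * s ^ (d + 1) := by
      calc b ^ (d + 1) ≤ (Real.sqrt K * s) ^ (d + 1) := pow_le_pow_left₀ hb0.le hratio _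
        _ = Real.sqrt K ^ (d + 1) * s ^ (d + 1) := mul_pow _ _ _
        _ ≤ K ^ (d + 1) * s ^ (d + 1) := by
            apply mul_le_mul_of_nonneg_right _ (by positivity)
            exact pow_le_pow_left₀ (Real.sqrt_nonneg _) hsKle _
    have hsplit : s ^ (d + 1) = s ^ (d - 1) * s ^ 2 := by
      rw [← pow_add]
      congr 1
      omega
    have e6 : 4 * (b - s) * b / s ^ 2 * (C0 * b ^ d)
        = (4 * C0 * (b - s) / s ^ 2) * b ^ (d + 1) := by
      rw [pow_succ]
      field_simp
      ring
    have hcoef3 : (0:ℝ) ≤ 4 * C0 * (b - s) / s ^ 2 := by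
      apply div_nonneg (by nlinarith) (by positivity)
    have h7 : (4 * C0 * (b - s) / s ^ 2) * b ^ (d + 1)
        ≤ (4 * C0 * (b - s) / s ^ 2) * (K ^ (d + 1) * s ^ (d + 1)) :=
      mul_le_mul_of_nonneg_left hpow hcoef3
    have e7 : (4 * C0 * (b - s) / s ^ 2) * (K ^ (d + 1) * s ^ (d + 1))
        = C1 * s ^ (d - 1) * (b - s) := by
      rw [hsplit, hC1def]
      field_simp
    calc (∫ x : Euc d, Real.exp (-2 * (V x - Vstar) / b ^ 2)) -
          (∫ x : Euc d, Real.exp (-2 * (V x - Vstar) / s ^ 2))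
        ≤ 4 * (b - s) * b / s ^ 2 * ∫ x : Euc d, Real.exp (-(V x - Vstar) / b ^ 2) := hmono2
      _ ≤ 4 * (b - s) * b / s ^ 2 * (C0 * b ^ d) := h6
      _ = (4 * C0 * (b - s) / s ^ 2) * b ^ (d + 1) := e6
      _ ≤ (4 * C0 * (b - s) / s ^ 2) * (K ^ (d + 1) * s ^ (d + 1)) := h7
      _ = C1 * s ^ (d - 1) * (b - s) := e7
  -- assemble the constant
  set Cfin : ℝ := ∑ k ∈ Finset.range N, max 0
    (((∫ x : Euc d, Real.exp (-2 * (V x - Vstar) / aSeq A C_T β k ^ 2)) -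
      (∫ x : Euc d, Real.exp (-2 * (V x - Vstar) / aSeq A C_T β (k + 1) ^ 2))) /
      (aSeq A C_T β (k + 1) ^ (d - 1) * (aSeq A C_T β k - aSeq A C_T β (k + 1)))) with hCfin
  have hCfin0 : 0 ≤ Cfin := Finset.sum_nonneg fun k _ => le_max_left 0 _
  refine ⟨C1 + 1 + Cfin, by linarith, fun n hn => ?_⟩
  have hs0 : 0 < aSeq A C_T β (n + 1) := aSeq_pos hA hCT hβ _
  have hΔ : 0 < aSeq A C_T β n - aSeq A C_T β (n + 1) := by
    linarith [aSeq_anti hA hCT hβ n]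
  have hden : 0 < aSeq A C_T β (n + 1) ^ (d - 1) * (aSeq A C_T β n - aSeq A C_T β (n + 1)) := by
    positivity
  refine ⟨hnonneg n, ?_⟩
  rcases le_or_gt N n with hNn | hNn
  · have h1 := hkey n hn (hNsmall n hNn)
    calc (∫ x : Euc d, Real.exp (-2 * (V x - Vstar) / aSeq A C_T β n ^ 2)) -
          (∫ x : Euc d, Real.exp (-2 * (V x - Vstar) / aSeq A C_T β (n + 1) ^ 2))
        ≤ C1 * aSeq A C_T β (n + 1) ^ (d - 1) * (aSeq A C_T β n - aSeq A C_T β (n + 1)) := h1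
      _ = C1 * (aSeq A C_T β (n + 1) ^ (d - 1) * (aSeq A C_T β n - aSeq A C_T β (n + 1))) := by
          ring
      _ ≤ (C1 + 1 + Cfin) *
          (aSeq A C_T β (n + 1) ^ (d - 1) * (aSeq A C_T β n - aSeq A C_T β (n + 1))) :=
          mul_le_mul_of_nonneg_right (by linarith) hden.le
      _ = (C1 + 1 + Cfin) * aSeq A C_T β (n + 1) ^ (d - 1) *
          (aSeq A C_T β n - aSeq A C_T β (n + 1)) := by ring
  · have hmem : n ∈ Finset.range N := Finset.mem_range.2 hNn
    set X : ℝ := (∫ x : Euc d, Real.exp (-2 * (V x - Vstar) / aSeq A C_T β n ^ 2)) -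
      (∫ x : Euc d, Real.exp (-2 * (V x - Vstar) / aSeq A C_T β (n + 1) ^ 2)) with hX
    set den : ℝ := aSeq A C_T β (n + 1) ^ (d - 1) * (aSeq A C_T β n - aSeq A C_T β (n + 1))
      with hdendef
    have hterm : X / den ≤ Cfin := by
      refine le_trans (le_max_right 0 _) ?_
      exact Finset.single_le_sum (f := fun k => max 0
        (((∫ x : Euc d, Real.exp (-2 * (V x - Vstar) / aSeq A C_T β k ^ 2)) -
          (∫ x : Euc d, Real.exp (-2 * (V x - Vstar) / aSeq A C_T β (k + 1) ^ 2))) /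
          (aSeq A C_T β (k + 1) ^ (d - 1) * (aSeq A C_T β k - aSeq A C_T β (k + 1)))))
        (fun k _ => le_max_left 0 _) hmem
    have hXeq : X = (X / den) * den := (div_mul_cancel₀ X hden.ne').symm
    calc X = (X / den) * den := hXeq
      _ ≤ Cfin * den := mul_le_mul_of_nonneg_right hterm hden.le
      _ ≤ (C1 + 1 + Cfin) * den := mul_le_mul_of_nonneg_right (by linarith) hden.le
      _ = (C1 + 1 + Cfin) * aSeq A C_T β (n + 1) ^ (d - 1) *
          (aSeq A C_T β n - aSeq A C_T β (n + 1)) := by rw [hdendef]; ring
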